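/- arXiv:2104.07061 — 3 statements merged into one kernel-verified Lean document; each statement's English description precedes it below -/
import Mathlib

section
/- The number of binary hierarchical clusterings (rooted binary trees with labeled leaves) on a set of n ≥ 2 elements is (2n-3)!!, the double factorial of 2n-3. -/
open Finset

/-- A binary hierarchical clustering of `X`: a laminar family of nonempty subsets of `X`
containing `X` and all singletons, in which every non-singleton member is the disjoint
union of exactly two other members. -/
def IsHC {α : Type*} [DecidableEq α] (X : Finset α) (H : Finset (Finset α)) : Prop :=
  X ∈ H ∧ (∀ x ∈ X, {x} ∈ H) ∧ (∀ A ∈ H, A.Nonempty ∧ A ⊆ X) ∧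
    (∀ A ∈ H, ∀ B ∈ H, A ⊆ B ∨ B ⊆ A ∨ Disjoint A B) ∧
    (∀ A ∈ H, 1 < A.card → ∃ B ∈ H, ∃ C ∈ H, Disjoint B C ∧ B ∪ C = A)

section HC
variable {α : Type*} [DecidableEq α]

lemma hc_finite (X : Finset α) : Finite {H : Finset (Finset α) // IsHC X H} := by
  have : {H : Finset (Finset α) | IsHC X H} ⊆ ↑(X.powerset.powerset) := by
    intro H hH
    simp only [Finset.coe_powerset, Set.mem_preimage, Set.mem_powerset_iff]
    intro A hA
    simp only [Set.mem_preimage, Set.mem_powerset_iff, Finset.coe_subset] at hA ⊢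
    exact (hH.2.2.1 A hA).2
  exact (Set.Finite.subset (X.powerset.powerset.finite_toSet) this).to_subtype

lemma hc_singleton (x : α) (H : Finset (Finset α)) (h : IsHC {x} H) : H = {{x}} := by
  ext A
  simp only [mem_singleton]
  constructor
  · intro hA
    obtain ⟨hne, hsub⟩ := h.2.2.1 A hA
    exact Finset.eq_singleton_iff_nonempty_unique_mem.2 ⟨hne, fun y hy => mem_singleton.1 (hsub hy)⟩
  · rintro rfl; exact h.1

lemma hc_restrict (X : Finset α) (H : Finset (Finset α)) (h : IsHC X H) (A : Finset α)
    (hA : A ∈ H) : IsHC A (H.filter (· ⊆ A)) := by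
  obtain ⟨hX, hsing, hmem, hlam, hsplit⟩ := h
  refine ⟨mem_filter.2 ⟨hA, subset_rfl⟩, ?_, ?_, ?_, ?_⟩
  · intro y hy
    exact mem_filter.2 ⟨hsing y ((hmem A hA).2 hy), singleton_subset_iff.2 hy⟩
  · intro B hB
    obtain ⟨hB, hBA⟩ := mem_filter.1 hB
    exact ⟨(hmem B hB).1, hBA⟩
  · intro B hB C hC
    exact hlam B (mem_filter.1 hB).1 C (mem_filter.1 hC).1
  · intro B hB hcard
    obtain ⟨hB, hBA⟩ := mem_filter.1 hB
    obtain ⟨C, hC, D, hD, hdisj, hCD⟩ := hsplit B hB hcard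
    exact ⟨C, mem_filter.2 ⟨hC, (hCD ▸ subset_union_left).trans hBA⟩,
      D, mem_filter.2 ⟨hD, (hCD ▸ subset_union_right).trans hBA⟩, hdisj, hCD⟩

lemma hc_card_aux (n : ℕ) : ∀ (X : Finset α) (H : Finset (Finset α)), IsHC X H →
    X.card = n → H.card = 2 * n - 1 := by
  induction n using Nat.strong_induction_on with
  | _ n ih =>
  intro X H h hn
  obtain ⟨hX, hsing, hmem, hlam, hsplit⟩ := h
  rcases Nat.lt_or_ge n 2 with hn2 | hn2
  · -- n = 0 or 1; n = 0 impossible since X ∈ H nonempty... X nonempty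
    have hXne : X.Nonempty := (hmem X hX).1
    have : n = 1 := by
      have := Finset.card_pos.2 hXne
      omega
    subst this
    obtain ⟨x, hx⟩ := Finset.card_eq_one.1 hn
    subst hx
    rw [hc_singleton x H ⟨hX, hsing, hmem, hlam, hsplit⟩]
    simp
  · -- split X
    have hcard : 1 < X.card := by omega
    obtain ⟨B, hB, C, hC, hdisj, hBC⟩ := hsplit X hX hcard
    have hBne := (hmem B hB).1
    have hCne := (hmem C hC).1
    have hBX : B ⊆ X := (hmem B hB).2
    have hCX : C ⊆ X := (hmem C hC).2
    have hcards : B.card + C.card = n := by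
      rw [← hn, ← hBC, card_union_of_disjoint hdisj]
    have hBlt : B.card < n := by
      have := card_pos.2 hCne; omega
    have hClt : C.card < n := by
      have := card_pos.2 hBne; omega
    have hHB := ih B.card hBlt B (H.filter (· ⊆ B)) (hc_restrict X H ⟨hX, hsing, hmem, hlam, hsplit⟩ B hB) rfl
    have hHC := ih C.card hClt C (H.filter (· ⊆ C)) (hc_restrict X H ⟨hX, hsing, hmem, hlam, hsplit⟩ C hC) rfl

    -- H = {X} ∪ filter ⊆B ∪ filter ⊆C
    have key : H = insert X (H.filter (· ⊆ B) ∪ H.filter (· ⊆ C)) := by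
      ext A
      simp only [mem_insert, mem_union, mem_filter]
      constructor
      · intro hA
        by_cases hAX : A = X
        · left; exact hAX
        · right
          have hAne := (hmem A hA).1
          have hAX' : A ⊆ X := (hmem A hA).2
          -- A vs B
          rcases hlam A hA B hB with hAB | hBA | hABd
          · exact Or.inl ⟨hA, hAB⟩
          · -- B ⊆ A; compare A with C
            rcases hlam A hA C hC with hAC | hCA | hACd
            · -- A ⊆ C and B ⊆ A: B ⊆ C contra disjoint
              have hBB : Disjoint B B := hdisj.mono_right (hBA.trans hAC)
              exact absurd (disjoint_self.1 hBB) hBne.ne_empty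
            · exact absurd (hAX'.antisymm (hBC ▸ union_subset hBA hCA)) hAX
            · left
              refine ⟨hA, fun y hy => ?_⟩
              have : y ∈ B ∪ C := hBC ▸ hAX' hy
              rcases mem_union.1 this with h | h
              · exact h
              · exact absurd h (disjoint_left.1 hACd hy)
          · right
            refine ⟨hA, fun y hy => ?_⟩
            have : y ∈ B ∪ C := hBC ▸ hAX' hy
            rcases mem_union.1 this with h | h
            · exact absurd h (disjoint_left.1 hABd hy)
            · exact h
      · rintro (rfl | ⟨hA, _⟩ | ⟨hA, _⟩) <;> assumption
    have hXnot : X ∉ H.filter (· ⊆ B) ∪ H.filter (· ⊆ C) := by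
      simp only [mem_union, mem_filter, not_or]
      constructor
      · rintro ⟨-, hXB⟩
        obtain ⟨c, hc⟩ := hCne
        exact disjoint_left.1 hdisj (hXB (hBC ▸ mem_union_right B hc)) hc
      · rintro ⟨-, hXC⟩
        obtain ⟨b, hb⟩ := hBne
        exact disjoint_right.1 hdisj (hXC (hBC ▸ mem_union_left C hb)) hb
    have hdisjF : Disjoint (H.filter (· ⊆ B)) (H.filter (· ⊆ C)) := by
      rw [disjoint_left]
      intro A hA1 hA2
      obtain ⟨hA, hAB⟩ := mem_filter.1 hA1
      obtain ⟨-, hAC⟩ := mem_filter.1 hA2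
      obtain ⟨a, ha⟩ := (hmem A hA).1
      exact disjoint_left.1 hdisj (hAB ha) (hAC ha)
    rw [key, card_insert_of_notMem hXnot, card_union_of_disjoint hdisjF, hHB, hHC]
    have := card_pos.2 hBne
    have := card_pos.2 hCne
    omega

lemma hc_card (X : Finset α) (H : Finset (Finset α)) (h : IsHC X H) :
    H.card = 2 * X.card - 1 := hc_card_aux X.card X H h rfl

end HC

section Ins
variable {α : Type*} [DecidableEq α]

/-- Insert a new leaf `x` as sibling of cluster `A`. -/
def hcIns (x : α) (H : Finset (Finset α)) (A : Finset α) : Finset (Finset α) :=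
  insert {x} (insert (insert x A) (H.image fun B => if A ⊂ B then insert x B else B))

lemma mem_hcIns {x : α} {X : Finset α} {H : Finset (Finset α)} {A : Finset α}
    (hH : IsHC X H) (hx : x ∉ X) (hA : A ∈ H) {B' : Finset α} :
    B' ∈ hcIns x H A ↔
      B' = {x} ∨ (B' ∈ H ∧ ¬ A ⊂ B') ∨ (x ∈ B' ∧ B'.erase x ∈ H ∧ A ⊆ B'.erase x) := by
  obtain ⟨hX, hsing, hmem, hlam, hsplit⟩ := hH
  have hx' : ∀ B ∈ H, x ∉ B := fun B hB h => hx ((hmem B hB).2 h)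
  have hxA : x ∉ A := hx' A hA
  have hAne : A.Nonempty := (hmem A hA).1
  simp only [hcIns, mem_insert, mem_image]
  constructor
  · rintro (rfl | rfl | ⟨B, hB, rfl⟩)
    · exact Or.inl rfl
    · refine Or.inr (Or.inr ⟨mem_insert_self x A, ?_, ?_⟩)
      · rw [erase_insert hxA]; exact hA
      · rw [erase_insert hxA]
    · by_cases hAB : A ⊂ B
      · simp only [if_pos hAB]
        refine Or.inr (Or.inr ⟨mem_insert_self x B, ?_, ?_⟩)
        · rw [erase_insert (hx' B hB)]; exact hB
        · rw [erase_insert (hx' B hB)]; exact hAB.subset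
      · simp only [if_neg hAB]
        exact Or.inr (Or.inl ⟨hB, hAB⟩)
  · rintro (rfl | ⟨hB, hAB⟩ | ⟨hxB, hBe, hABe⟩)
    · exact Or.inl rfl
    · exact Or.inr (Or.inr ⟨B', hB, by rw [if_neg hAB]⟩)
    · by_cases hcase : A = B'.erase x
      · refine Or.inr (Or.inl ?_)
        rw [hcase, insert_erase hxB]
      · refine Or.inr (Or.inr ⟨B'.erase x, hBe, ?_⟩)
        rw [if_pos (Finset.ssubset_iff_subset_ne.2 ⟨hABe, hcase⟩), insert_erase hxB]

lemma isHC_hcIns {x : α} {X : Finset α} {H : Finset (Finset α)} {A : Finset α}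
    (hH : IsHC X H) (hx : x ∉ X) (hA : A ∈ H) :
    IsHC (insert x X) (hcIns x H A) := by
  have hmemIff := fun {B' : Finset α} => mem_hcIns (x := x) hH hx hA (B' := B')
  obtain ⟨hX, hsing, hmem, hlam, hsplit⟩ := hH
  have hx' : ∀ B ∈ H, x ∉ B := fun B hB h => hx ((hmem B hB).2 h)
  have hxA : x ∉ A := hx' A hA
  have hAne : A.Nonempty := (hmem A hA).1
  have hAX : A ⊆ X := (hmem A hA).2
  refine ⟨?_, ?_, ?_, ?_, ?_⟩
  · -- root
    by_cases hAXeq : A = X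
    · exact hmemIff.2 (Or.inr (Or.inr ⟨mem_insert_self x X,
        by rw [erase_insert hx]; exact hX, by rw [erase_insert hx, ← hAXeq]⟩))
    · exact hmemIff.2 (Or.inr (Or.inr ⟨mem_insert_self x X,
        by rw [erase_insert hx]; exact hX, by rw [erase_insert hx]; exact hAX⟩))
  · -- singletons
    intro y hy
    rcases mem_insert.1 hy with rfl | hy
    · exact hmemIff.2 (Or.inl rfl)
    · refine hmemIff.2 (Or.inr (Or.inl ⟨hsing y hy, ?_⟩))
      intro hAy
      rcases hAne with ⟨a, ha⟩
      have := hAy.subset ha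
      rw [mem_singleton] at this
      subst this
      exact hAy.ne (le_antisymm hAy.subset (singleton_subset_iff.2 ha))
  · -- nonempty and subset
    intro B' hB'
    rcases hmemIff.1 hB' with rfl | ⟨hB, _⟩ | ⟨hxB, hBe, _⟩
    · exact ⟨⟨x, mem_singleton_self x⟩, singleton_subset_iff.2 (mem_insert_self x X)⟩
    · exact ⟨(hmem B' hB).1, (hmem B' hB).2.trans (subset_insert x X)⟩
    · refine ⟨⟨x, hxB⟩, ?_⟩
      intro y hy
      by_cases hyx : y = x
      · exact mem_insert.2 (Or.inl hyx)
      · exact mem_insert_of_mem ((hmem _ hBe).2 (mem_erase.2 ⟨hyx, hy⟩))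
  · -- laminar
    intro B' hB' C' hC'
    rcases hmemIff.1 hB' with rfl | ⟨hB, hAB⟩ | ⟨hxB, hBe, hABe⟩ <;>
      rcases hmemIff.1 hC' with rfl | ⟨hC, hAC⟩ | ⟨hxC, hCe, hACe⟩
    · exact Or.inl subset_rfl
    · exact Or.inr (Or.inr (by simp [disjoint_singleton_left, hx' C' hC]))
    · exact Or.inl (singleton_subset_iff.2 hxC)
    · exact Or.inr (Or.inr (by simp [disjoint_singleton_right, hx' B' hB]))
    · exact hlam B' hB C' hC
    · -- B' ∈ H, ¬A⊂B'  vs x ∈ C'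
      rcases hlam B' hB _ hCe with h1 | h1 | h1
      · exact Or.inl (h1.trans (erase_subset x C'))
      · -- C'.erase x ⊆ B' : then A ⊆ B', so A = B', so C'.erase x = A = B'
        have hAB' : A = B' := by
          by_contra hne
          exact hAB (Finset.ssubset_iff_subset_ne.2 ⟨hACe.trans h1, hne⟩)
        have : C'.erase x = B' := le_antisymm h1 (hAB' ▸ hACe)
        exact Or.inl (this ▸ erase_subset x C')
      · refine Or.inr (Or.inr (disjoint_left.2 fun y hy hyC => ?_))
        have hyx : y ≠ x := fun h => hx' B' hB (h ▸ hy)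
        exact disjoint_left.1 h1 hy (mem_erase.2 ⟨hyx, hyC⟩)
    · exact Or.inr (Or.inl (singleton_subset_iff.2 hxB))
    · -- symmetric of above
      rcases hlam C' hC _ hBe with h1 | h1 | h1
      · exact Or.inr (Or.inl (h1.trans (erase_subset x B')))
      · have hAC' : A = C' := by
          by_contra hne
          exact hAC (Finset.ssubset_iff_subset_ne.2 ⟨hABe.trans h1, hne⟩)
        have : B'.erase x = C' := le_antisymm h1 (hAC' ▸ hABe)
        exact Or.inr (Or.inl (this ▸ erase_subset x B'))
      · refine Or.inr (Or.inr (disjoint_right.2 fun y hy hyB => ?_))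
        have hyx : y ≠ x := fun h => hx' C' hC (h ▸ hy)
        exact disjoint_left.1 h1 hy (mem_erase.2 ⟨hyx, hyB⟩)
    · -- both contain x
      rcases hlam _ hBe _ hCe with h1 | h1 | h1
      · refine Or.inl (fun y hy => ?_)
        by_cases hyx : y = x
        · exact hyx ▸ hxC
        · exact (erase_subset x C') (h1 (mem_erase.2 ⟨hyx, hy⟩))
      · refine Or.inr (Or.inl (fun y hy => ?_))
        by_cases hyx : y = x
        · exact hyx ▸ hxB
        · exact (erase_subset x B') (h1 (mem_erase.2 ⟨hyx, hy⟩))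
      · -- both contain A ⊇ nonempty: impossible
        rcases hAne with ⟨a, ha⟩
        exact absurd (hACe ha) (disjoint_left.1 h1 (hABe ha))
  · -- splitting
    intro B' hB' hcard
    rcases hmemIff.1 hB' with rfl | ⟨hB, hAB⟩ | ⟨hxB, hBe, hABe⟩
    · simp at hcard
    · obtain ⟨C, hC, D, hD, hdisj, hCD⟩ := hsplit B' hB hcard
      have hnC : ¬ A ⊂ C := fun h => hAB (h.trans_subset (hCD ▸ subset_union_left))
      have hnD : ¬ A ⊂ D := fun h => hAB (h.trans_subset (hCD ▸ subset_union_right))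
      exact ⟨C, hmemIff.2 (Or.inr (Or.inl ⟨hC, hnC⟩)),
        D, hmemIff.2 (Or.inr (Or.inl ⟨hD, hnD⟩)), hdisj, hCD⟩
    · set C := B'.erase x with hCdef
      by_cases hcase : A = C
      · -- B' = insert x A, split into {x} and A
        refine ⟨{x}, hmemIff.2 (Or.inl rfl), A, hmemIff.2 (Or.inr (Or.inl ⟨hA, fun h => h.ne rfl⟩)),
          ?_, ?_⟩
        · simpa [disjoint_singleton_left] using hxA
        · rw [hcase, ← insert_eq, insert_erase hxB]
      · have hAC : A ⊂ C := Finset.ssubset_iff_subset_ne.2 ⟨hABe, hcase⟩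
        have hcardC : 1 < C.card := by
          have h1 : 0 < A.card := card_pos.2 hAne
          have h2 : A.card < C.card := card_lt_card hAC
          omega
        obtain ⟨D, hD, E, hE, hdisj, hDE⟩ := hsplit C hBe hcardC
        have key : ∀ D E : Finset α, D ∈ H → E ∈ H → Disjoint D E → D ∪ E = C → A ⊆ D →
            ∃ P ∈ hcIns x H A, ∃ Q ∈ hcIns x H A, Disjoint P Q ∧ P ∪ Q = B' := by
          intro D E hD hE hdisj hDE hAD
          refine ⟨insert x D, hmemIff.2 (Or.inr (Or.inr ⟨mem_insert_self x D,
            by rw [erase_insert (hx' D hD)]; exact hD, by rw [erase_insert (hx' D hD)]; exact hAD⟩)),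
            E, hmemIff.2 (Or.inr (Or.inl ⟨hE, ?_⟩)), ?_, ?_⟩
          · intro hAE
            rcases hAne with ⟨a, ha⟩
            exact disjoint_left.1 hdisj (hAD ha) (hAE.subset ha)
          · rw [disjoint_insert_left]
            exact ⟨hx' E hE, hdisj⟩
          · rw [insert_union, hDE, hCdef, insert_erase hxB]
        -- A ⊆ D or A ⊆ E
        have hADE : A ⊆ D ∨ A ⊆ E := by
          have hACsub : A ⊆ D ∪ E := hDE ▸ hAC.subset
          rcases hlam A hA D hD with h1 | h1 | h1
          · exact Or.inl h1
          · rcases hlam A hA E hE with h2 | h2 | h2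
            · exact Or.inr h2
            · exfalso
              have : C ⊆ A := hDE ▸ union_subset h1 h2
              exact hcase (le_antisymm hAC.subset this)
            · refine Or.inl fun y hy => ?_
              exact (mem_union.1 (hACsub hy)).resolve_right fun h => disjoint_left.1 h2 hy h
          · refine Or.inr fun y hy => ?_
            exact (mem_union.1 (hACsub hy)).resolve_left fun h => disjoint_left.1 h1 hy h
        rcases hADE with hAD | hAE
        · exact key D E hD hE hdisj hDE hAD
        · exact key E D hE hD hdisj.symm (by rw [union_comm]; exact hDE) hAE

end Ins

section Del
variable {α : Type*} [DecidableEq α]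

/-- Remove the leaf `x`. -/
def hcDel (x : α) (H' : Finset (Finset α)) : Finset (Finset α) :=
  (H'.image (·.erase x)).erase ∅

lemma mem_hcDel {x : α} {H' : Finset (Finset α)} {B : Finset α} :
    B ∈ hcDel x H' ↔ B ≠ ∅ ∧ ∃ B' ∈ H', B'.erase x = B := by
  simp [hcDel, and_comm]

lemma hcDel_hcIns {x : α} {X : Finset α} {H : Finset (Finset α)} {A : Finset α}
    (hH : IsHC X H) (hx : x ∉ X) (hA : A ∈ H) :
    hcDel x (hcIns x H A) = H := by
  have hmemIff := fun {B' : Finset α} => mem_hcIns (x := x) hH hx hA (B' := B')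
  obtain ⟨hX, hsing, hmem, hlam, hsplit⟩ := hH
  have hx' : ∀ B ∈ H, x ∉ B := fun B hB h => hx ((hmem B hB).2 h)
  ext B
  rw [mem_hcDel]
  constructor
  · rintro ⟨hBne, B', hB', rfl⟩
    rcases hmemIff.1 hB' with rfl | ⟨hB, _⟩ | ⟨hxB, hBe, _⟩
    · simp at hBne
    · rwa [erase_eq_of_notMem (hx' B' hB)]
    · exact hBe
  · intro hB
    by_cases hAB : A ⊂ B
    · refine ⟨(hmem B hB).1.ne_empty, insert x B, hmemIff.2 (Or.inr (Or.inr
        ⟨mem_insert_self x B, ?_, ?_⟩)), erase_insert (hx' B hB)⟩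
      · rw [erase_insert (hx' B hB)]; exact hB
      · rw [erase_insert (hx' B hB)]; exact hAB.subset
    · exact ⟨(hmem B hB).1.ne_empty, B, hmemIff.2 (Or.inr (Or.inl ⟨hB, hAB⟩)),
        erase_eq_of_notMem (hx' B hB)⟩

lemma hcIns_parent {x : α} {X : Finset α} {H : Finset (Finset α)} {A : Finset α}
    (hH : IsHC X H) (hx : x ∉ X) (hA : A ∈ H) :
    insert x A ∈ hcIns x H A ∧
      ∀ B' ∈ hcIns x H A, x ∈ B' → B' ≠ {x} → insert x A ⊆ B' := by
  have hmemIff := fun {B' : Finset α} => mem_hcIns (x := x) hH hx hA (B' := B')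
  have hx' : ∀ B ∈ H, x ∉ B := fun B hB h => hx ((hH.2.2.1 B hB).2 h)
  have hxA : x ∉ A := hx' A hA
  constructor
  · exact hmemIff.2 (Or.inr (Or.inr ⟨mem_insert_self x A,
      by rw [erase_insert hxA]; exact hA, by rw [erase_insert hxA]⟩))
  · intro B' hB' hxB hBne
    rcases hmemIff.1 hB' with rfl | ⟨hB, _⟩ | ⟨_, _, hABe⟩
    · exact absurd rfl hBne
    · exact absurd hxB (hx' B' hB)
    · intro y hy
      rcases mem_insert.1 hy with rfl | hy
      · exact hxB
      · exact (erase_subset x B') (hABe hy)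

lemma hcIns_injective {x : α} {X : Finset α} (hx : x ∉ X)
    {H₁ H₂ : Finset (Finset α)} {A₁ A₂ : Finset α}
    (h₁ : IsHC X H₁) (h₂ : IsHC X H₂) (hA₁ : A₁ ∈ H₁) (hA₂ : A₂ ∈ H₂)
    (heq : hcIns x H₁ A₁ = hcIns x H₂ A₂) : H₁ = H₂ ∧ A₁ = A₂ := by
  have hH : H₁ = H₂ := by
    rw [← hcDel_hcIns h₁ hx hA₁, ← hcDel_hcIns h₂ hx hA₂, heq]
  refine ⟨hH, ?_⟩
  obtain ⟨hmem₁, hpar₁⟩ := hcIns_parent h₁ hx hA₁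
  obtain ⟨hmem₂, hpar₂⟩ := hcIns_parent h₂ hx hA₂
  have hA₁ne : A₁.Nonempty := (h₁.2.2.1 A₁ hA₁).1
  have hA₂ne : A₂.Nonempty := (h₂.2.2.1 A₂ hA₂).1
  have hx₁ : x ∉ A₁ := fun h => hx ((h₁.2.2.1 A₁ hA₁).2 h)
  have hx₂ : x ∉ A₂ := fun h => hx ((h₂.2.2.1 A₂ hA₂).2 h)
  have hne₁ : insert x A₁ ≠ {x} := by
    intro h
    rcases hA₁ne with ⟨a, ha⟩
    have : a ∈ ({x} : Finset α) := h ▸ mem_insert_of_mem ha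
    exact hx₁ ((mem_singleton.1 this) ▸ ha)
  have hne₂ : insert x A₂ ≠ {x} := by
    intro h
    rcases hA₂ne with ⟨a, ha⟩
    have : a ∈ ({x} : Finset α) := h ▸ mem_insert_of_mem ha
    exact hx₂ ((mem_singleton.1 this) ▸ ha)
  have h21 : insert x A₂ ⊆ insert x A₁ :=
    hpar₂ _ (heq ▸ hmem₁) (mem_insert_self x A₁) hne₁
  have h12 : insert x A₁ ⊆ insert x A₂ :=
    hpar₁ _ (heq ▸ hmem₂ : insert x A₂ ∈ hcIns x H₁ A₁) (mem_insert_self x A₂) hne₂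
  have : insert x A₁ = insert x A₂ := le_antisymm h12 h21
  have := congrArg (·.erase x) this
  simpa [erase_insert hx₁, erase_insert hx₂] using this

/-- Existence of the sibling of the leaf `x`. -/
lemma hc_sibling {x : α} {X : Finset α} {H' : Finset (Finset α)}
    (hH' : IsHC (insert x X) H') (hx : x ∉ X) (hXne : X.Nonempty) :
    ∃ A, A ∈ H' ∧ x ∉ A ∧ insert x A ∈ H' ∧
      ∀ B' ∈ H', x ∈ B' → B' ≠ {x} → insert x A ⊆ B' := by
  obtain ⟨hX, hsing, hmem, hlam, hsplit⟩ := hH'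
  set S := H'.filter (fun B => x ∈ B ∧ B ≠ {x}) with hS
  have hXS : insert x X ∈ S := by
    refine mem_filter.2 ⟨hX, mem_insert_self x X, ?_⟩
    intro h
    rcases hXne with ⟨y, hy⟩
    have : y ∈ ({x} : Finset α) := h ▸ mem_insert_of_mem hy
    exact hx ((mem_singleton.1 this) ▸ hy)
  obtain ⟨P, hPS, hPmin⟩ := Finset.exists_min_image S (·.card) ⟨_, hXS⟩
  obtain ⟨hP, hxP, hPne⟩ := mem_filter.1 hPS
  -- P is minimal w.r.t. ⊆ among members of S
  have hmin : ∀ Q ∈ H', x ∈ Q → Q ≠ {x} → P ⊆ Q := by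
    intro Q hQ hxQ hQne
    have hQS : Q ∈ S := mem_filter.2 ⟨hQ, hxQ, hQne⟩
    rcases hlam P hP Q hQ with h | h | h
    · exact h
    · have : P.card ≤ Q.card := hPmin Q hQS
      rw [(Finset.eq_of_subset_of_card_le h this : Q = P)]
    · exact absurd hxQ (disjoint_left.1 h hxP)
  have hPcard : 1 < P.card := by
    have h1 : {x} ⊆ P := singleton_subset_iff.2 hxP
    have h2 : {x} ≠ P := fun h => hPne h.symm
    have := Finset.card_lt_card (Finset.ssubset_iff_subset_ne.2 ⟨h1, h2⟩)
    simpa using this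
  obtain ⟨B, hB, C, hC, hdisj, hBC⟩ := hsplit P hP hPcard
  have hBP : B ⊆ P := hBC ▸ subset_union_left
  have hCP : C ⊆ P := hBC ▸ subset_union_right
  have key : ∀ B C : Finset α, B ∈ H' → C ∈ H' → Disjoint B C → B ∪ C = P → x ∈ B →
      ∃ A, A ∈ H' ∧ x ∉ A ∧ insert x A ∈ H' ∧
        ∀ B' ∈ H', x ∈ B' → B' ≠ {x} → insert x A ⊆ B' := by
    intro B C hB hC hdisj hBC hxB
    have hBx : B = {x} := by
      by_contra hne
      have hPB : P ⊆ B := hmin B hB hxB hne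
      rcases (hmem C hC).1 with ⟨c, hc⟩
      exact disjoint_left.1 hdisj (hPB (hBC ▸ mem_union_right B hc)) hc
    have hxC : x ∉ C := disjoint_left.1 hdisj (hBx ▸ mem_singleton_self x)
    refine ⟨C, hC, hxC, ?_, ?_⟩
    · have : insert x C = P := by rw [← hBC, hBx, ← insert_eq]
      exact this ▸ hP
    · intro B' hB' hxB' hB'ne
      have : insert x C = P := by rw [← hBC, hBx, ← insert_eq]
      exact this ▸ hmin B' hB' hxB' hB'ne
  rcases mem_union.1 (hBC ▸ hxP) with hxB | hxC
  · exact key B C hB hC hdisj hBC hxB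
  · exact key C B hC hB hdisj.symm (by rw [union_comm]; exact hBC) hxC

end Del

section Surj
variable {α : Type*} [DecidableEq α]

lemma erase_nonempty_of_ne_singleton {x : α} {B : Finset α} (hxB : x ∈ B) (h : B ≠ {x}) :
    (B.erase x).Nonempty := by
  have hss : {x} ⊂ B := Finset.ssubset_iff_subset_ne.2 ⟨singleton_subset_iff.2 hxB, Ne.symm h⟩
  obtain ⟨y, hyB, hyx⟩ := Finset.exists_of_ssubset hss
  exact ⟨y, mem_erase.2 ⟨fun h => hyx (h ▸ mem_singleton_self x), hyB⟩⟩

lemma isHC_hcDel {x : α} {X : Finset α} {H' : Finset (Finset α)}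
    (hH' : IsHC (insert x X) H') (hx : x ∉ X) (hXne : X.Nonempty) :
    IsHC X (hcDel x H') := by
  obtain ⟨hX, hsing, hmem, hlam, hsplit⟩ := hH'
  refine ⟨?_, ?_, ?_, ?_, ?_⟩
  · exact mem_hcDel.2 ⟨hXne.ne_empty, insert x X, hX, erase_insert hx⟩
  · intro y hy
    have hyx : y ≠ x := fun h => hx (h ▸ hy)
    exact mem_hcDel.2 ⟨singleton_ne_empty y, {y}, hsing y (mem_insert_of_mem hy),
      erase_eq_of_notMem (by simp [Ne.symm hyx])⟩
  · rintro B hB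
    obtain ⟨hBne, B', hB', rfl⟩ := mem_hcDel.1 hB
    refine ⟨nonempty_iff_ne_empty.2 hBne, ?_⟩
    have := erase_subset_erase x (hmem B' hB').2
    rwa [erase_insert hx] at this
  · rintro B hB C hC
    obtain ⟨hBne, B', hB', rfl⟩ := mem_hcDel.1 hB
    obtain ⟨hCne, C', hC', rfl⟩ := mem_hcDel.1 hC
    rcases hlam B' hB' C' hC' with h | h | h
    · exact Or.inl (erase_subset_erase x h)
    · exact Or.inr (Or.inl (erase_subset_erase x h))
    · exact Or.inr (Or.inr (h.mono (erase_subset x B') (erase_subset x C')))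
  · rintro B hB hcard
    obtain ⟨hBne, B', hB', rfl⟩ := mem_hcDel.1 hB
    by_cases hxB : x ∈ B'
    · -- reduce to splitting inside B'
      have hB'x : B' ≠ {x} := by
        intro h; subst h; simp at hBne
      -- helper handling the two symmetric cases
      have key : ∀ C' D' : Finset α, C' ∈ H' → D' ∈ H' → Disjoint C' D' → C' ∪ D' = B' →
          x ∈ C' → ∃ P ∈ hcDel x H', ∃ Q ∈ hcDel x H', Disjoint P Q ∧ P ∪ Q = B'.erase x := by
        intro C' D' hC' hD' hdisj hCD hxC
        have hxD : x ∉ D' := disjoint_left.1 hdisj hxC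
        by_cases hCx : C' = {x}
        · -- B'.erase x = D'; split D' instead
          have hBD : B'.erase x = D' := by
            rw [← hCD, hCx, ← insert_eq, erase_insert hxD]
          have hcardD : 1 < D'.card := by rw [← hBD]; exact hcard
          obtain ⟨E, hE, F, hF, hdisj2, hEF⟩ := hsplit D' hD' hcardD
          have hxE : x ∉ E := fun h => hxD (hEF ▸ mem_union_left F h)
          have hxF : x ∉ F := fun h => hxD (hEF ▸ mem_union_right E h)
          refine ⟨E, mem_hcDel.2 ⟨(hmem E hE).1.ne_empty, E, hE, erase_eq_of_notMem hxE⟩,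
            F, mem_hcDel.2 ⟨(hmem F hF).1.ne_empty, F, hF, erase_eq_of_notMem hxF⟩,
            hdisj2, by rw [hEF, hBD]⟩
        · -- C'.erase x and D' split B'.erase x
          have hCe : (C'.erase x).Nonempty := erase_nonempty_of_ne_singleton hxC hCx
          refine ⟨C'.erase x, mem_hcDel.2 ⟨hCe.ne_empty, C', hC', rfl⟩,
            D', mem_hcDel.2 ⟨(hmem D' hD').1.ne_empty, D', hD', erase_eq_of_notMem hxD⟩,
            hdisj.mono (erase_subset x C') subset_rfl, ?_⟩
          rw [← hCD, erase_union_distrib, erase_eq_of_notMem hxD]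
      have hcardB : 1 < B'.card := by
        have := card_erase_le (a := x) (s := B')
        omega
      obtain ⟨C', hC', D', hD', hdisj, hCD⟩ := hsplit B' hB' hcardB
      rcases mem_union.1 (hCD ▸ hxB) with hxC | hxD
      · exact key C' D' hC' hD' hdisj hCD hxC
      · exact key D' C' hD' hC' hdisj.symm (by rw [union_comm]; exact hCD) hxD
    · rw [erase_eq_of_notMem hxB] at hcard ⊢
      obtain ⟨C', hC', D', hD', hdisj, hCD⟩ := hsplit B' hB' hcard
      have hxC : x ∉ C' := fun h => hxB (hCD ▸ mem_union_left D' h)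
      have hxD : x ∉ D' := fun h => hxB (hCD ▸ mem_union_right C' h)
      exact ⟨C', mem_hcDel.2 ⟨(hmem C' hC').1.ne_empty, C', hC', erase_eq_of_notMem hxC⟩,
        D', mem_hcDel.2 ⟨(hmem D' hD').1.ne_empty, D', hD', erase_eq_of_notMem hxD⟩,
        hdisj, hCD⟩

lemma hcIns_hcDel {x : α} {X : Finset α} {H' : Finset (Finset α)}
    (hH' : IsHC (insert x X) H') (hx : x ∉ X) (hXne : X.Nonempty) :
    ∃ H A, IsHC X H ∧ A ∈ H ∧ hcIns x H A = H' := by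
  obtain ⟨A, hAH', hxA, hPA, hmin⟩ := hc_sibling hH' hx hXne
  have hH : IsHC X (hcDel x H') := isHC_hcDel hH' hx hXne
  have hAne : A.Nonempty := (hH'.2.2.1 A hAH').1
  have hA : A ∈ hcDel x H' := mem_hcDel.2 ⟨hAne.ne_empty, A, hAH', erase_eq_of_notMem hxA⟩
  refine ⟨hcDel x H', A, hH, hA, ?_⟩
  obtain ⟨hX, hsing, hmem, hlam, hsplit⟩ := hH'
  ext B'
  rw [mem_hcIns hH hx hA]
  constructor
  · rintro (rfl | ⟨hB, hnAB⟩ | ⟨hxB, hBe, hABe⟩)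
    · exact hsing x (mem_insert_self x X)
    · obtain ⟨hBne, B'', hB'', rfl⟩ := mem_hcDel.1 hB
      by_cases hxB : x ∈ B''
      · have hB''x : B'' ≠ {x} := by intro h; subst h; simp at hBne
        have hsub : insert x A ⊆ B'' := hmin B'' hB'' hxB hB''x
        have hAB : A ⊆ B''.erase x := by
          intro a ha
          exact mem_erase.2 ⟨fun h => hxA (h ▸ ha), hsub (mem_insert_of_mem ha)⟩
        have : A = B''.erase x := by
          by_contra hne
          exact hnAB (Finset.ssubset_iff_subset_ne.2 ⟨hAB, hne⟩)
        rw [← this]; exact hAH'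
      · rwa [erase_eq_of_notMem hxB]
    · -- B' = insert x (B'.erase x) and B'.erase x ∈ hcDel
      obtain ⟨hCne, C'', hC'', hCe⟩ := mem_hcDel.1 hBe
      by_cases hxC : x ∈ C''
      · have : C'' = B' := by rw [← insert_erase hxC, hCe, insert_erase hxB]
        exact this ▸ hC''
      · rw [erase_eq_of_notMem hxC] at hCe
        subst hCe
        -- C'' = B'.erase x ⊇ A, x ∉ C''; compare with P = insert x A
        rcases hlam _ hC'' (insert x A) hPA with h | h | h
        · have hCA : B'.erase x ⊆ A := fun y hy => (mem_insert.1 (h hy)).resolve_left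
            (fun he => hxC (he ▸ hy))
          have heq : B'.erase x = A := le_antisymm hCA hABe
          rw [← insert_erase hxB, heq]
          exact hPA
        · exact absurd (h (mem_insert_self x A)) hxC
        · rcases hAne with ⟨a, ha⟩
          exact absurd (hABe ha) (disjoint_right.1 h (mem_insert_of_mem ha))
  · intro hB'
    by_cases hxB : x ∈ B'
    · by_cases hBx : B' = {x}
      · exact Or.inl hBx
      · refine Or.inr (Or.inr ⟨hxB, mem_hcDel.2
          ⟨(erase_nonempty_of_ne_singleton hxB hBx).ne_empty, B', hB', rfl⟩, ?_⟩)
        intro a ha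
        exact mem_erase.2 ⟨fun h => hxA (h ▸ ha),
          hmin B' hB' hxB hBx (mem_insert_of_mem ha)⟩
    · refine Or.inr (Or.inl ⟨mem_hcDel.2 ⟨(hmem B' hB').1.ne_empty, B', hB',
        erase_eq_of_notMem hxB⟩, ?_⟩)
      intro hAB
      rcases hlam B' hB' (insert x A) hPA with h | h | h
      · have hBA : B' ⊆ A := fun y hy => (mem_insert.1 (h hy)).resolve_left
          (fun he => hxB (he ▸ hy))
        exact hAB.ne (le_antisymm hAB.subset hBA)
      · exact hxB (h (mem_insert_self x A))
      · rcases hAne with ⟨a, ha⟩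
        exact absurd (hAB.subset ha) (disjoint_right.1 h (mem_insert_of_mem ha))

end Surj

section Count
variable {α : Type*} [DecidableEq α]

lemma hc_count_singleton (a : α) :
    Nat.card {H : Finset (Finset α) // IsHC ({a} : Finset α) H} = 1 := by
  have hHC : IsHC ({a} : Finset α) {{a}} := by
    refine ⟨mem_singleton_self _, ?_, ?_, ?_, ?_⟩
    · intro y hy; rw [mem_singleton.1 hy]; exact mem_singleton_self _
    · intro A hA
      rw [mem_singleton.1 hA]
      exact ⟨singleton_nonempty a, subset_rfl⟩
    · intro A hA B hB
      rw [mem_singleton.1 hA, mem_singleton.1 hB]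
      exact Or.inl subset_rfl
    · intro A hA hcard
      rw [mem_singleton.1 hA] at hcard
      simp at hcard
  have : Nonempty {H : Finset (Finset α) // IsHC ({a} : Finset α) H} := ⟨⟨_, hHC⟩⟩
  have hsub : Subsingleton {H : Finset (Finset α) // IsHC ({a} : Finset α) H} := by
    constructor
    rintro ⟨H₁, h₁⟩ ⟨H₂, h₂⟩
    simp only [Subtype.mk.injEq]
    rw [hc_singleton a H₁ h₁, hc_singleton a H₂ h₂]
  exact Nat.card_unique

lemma hc_count_insert (x : α) (X : Finset α) (hx : x ∉ X) (hXne : X.Nonempty) :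
    Nat.card {H : Finset (Finset α) // IsHC (insert x X) H} =
      (2 * X.card - 1) * Nat.card {H : Finset (Finset α) // IsHC X H} := by
  haveI := hc_finite (α := α) X
  haveI := hc_finite (α := α) (insert x X)
  haveI : Fintype {H : Finset (Finset α) // IsHC X H} := Fintype.ofFinite _
  haveI : Fintype {H : Finset (Finset α) // IsHC (insert x X) H} := Fintype.ofFinite _
  set f : (Σ H : {H : Finset (Finset α) // IsHC X H}, {A // A ∈ H.1}) →
      {H' : Finset (Finset α) // IsHC (insert x X) H'} :=
    fun p => ⟨hcIns x p.1.1 p.2.1, isHC_hcIns p.1.2 hx p.2.2⟩ with hf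
  have hbij : Function.Bijective f := by
    constructor
    · rintro ⟨⟨H₁, h₁⟩, ⟨A₁, hA₁⟩⟩ ⟨⟨H₂, h₂⟩, ⟨A₂, hA₂⟩⟩ heq
      simp only [hf, Subtype.mk.injEq] at heq
      obtain ⟨hH, hA⟩ := hcIns_injective hx h₁ h₂ hA₁ hA₂ heq
      subst hH; subst hA; rfl
    · rintro ⟨H', hH'⟩
      obtain ⟨H, A, hH, hA, heq⟩ := hcIns_hcDel hH' hx hXne
      exact ⟨⟨⟨H, hH⟩, ⟨A, hA⟩⟩, Subtype.ext heq⟩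
  have h1 : Nat.card (Σ H : {H : Finset (Finset α) // IsHC X H}, {A // A ∈ H.1}) =
      Nat.card {H' : Finset (Finset α) // IsHC (insert x X) H'} :=
    Nat.card_eq_of_bijective f hbij
  rw [← h1]
  rw [Nat.card_eq_fintype_card, Fintype.card_sigma]
  have : ∀ H : {H : Finset (Finset α) // IsHC X H},
      Fintype.card {A // A ∈ H.1} = 2 * X.card - 1 := by
    intro H
    rw [Fintype.card_coe]
    exact hc_card X H.1 H.2
  rw [Finset.sum_congr rfl (fun H _ => this H), Finset.sum_const, smul_eq_mul,
    Nat.card_eq_fintype_card]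
  rw [Finset.card_univ, Nat.mul_comm]

lemma hc_count (n : ℕ) (hn : 1 ≤ n) (X : Finset α) (hX : X.card = n) :
    Nat.card {H : Finset (Finset α) // IsHC X H} = Nat.doubleFactorial (2 * n - 3) := by
  induction n generalizing X with
  | zero => omega
  | succ n ih =>
    rcases Nat.eq_or_lt_of_le hn with h1 | h1
    · -- n + 1 = 1
      have : n = 0 := by omega
      subst this
      obtain ⟨a, ha⟩ := Finset.card_eq_one.1 hX
      subst ha
      simpa using hc_count_singleton a
    · -- n ≥ 1
      have hn1 : 1 ≤ n := by omega
      obtain ⟨x, hx⟩ : X.Nonempty := card_pos.1 (by omega)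
      have hxe : x ∉ X.erase x := notMem_erase x X
      have hins : insert x (X.erase x) = X := insert_erase hx
      have hcarde : (X.erase x).card = n := by
        rw [card_erase_of_mem hx, hX]
        omega
      have hne : (X.erase x).Nonempty := card_pos.1 (by omega)
      have := hc_count_insert x (X.erase x) hxe hne
      rw [hins, hcarde] at this
      rw [this, ih hn1 (X.erase x) hcarde]
      rcases Nat.eq_or_lt_of_le hn1 with h2 | h2
      · -- n = 1 : (2*1-1) * df(2*1-3) = 1 = df(2*2-3)
        rw [← h2]
        simp [Nat.doubleFactorial]
      · -- n ≥ 2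
        have h3 : 2 * (n + 1) - 3 = (2 * n - 3) + 2 := by omega
        rw [h3, Nat.doubleFactorial]
        have : 2 * n - 3 + 2 = 2 * n - 1 := by omega
        rw [this]

end Count


/-- The number of binary hierarchical clusterings on a set of `n ≥ 2` elements is `(2n-3)!!`. -/
theorem stmt_0 {α : Type*} [DecidableEq α] (X : Finset α) (n : ℕ) (hn : 2 ≤ n)
    (hX : X.card = n) :
    Nat.card {H : Finset (Finset α) // IsHC X H} = Nat.doubleFactorial (2 * n - 3) := by
  exact hc_count n (by omega) X hX
end

section
/- The heuristic h_cc(X) = Σ_{i<j, w_{ij}>0} w_{ij} is admissible for hierarchical correlation clustering: for every binary hierarchical clustering H of X, h_cc(X) ≤ φ_HCC(H), where φ_HCC(H) = Σ_{(X_L,X_R) ∈ sibs(H)} ψ(X_L, X_R). -/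
open Finset

/-- Hierarchical correlation clustering sibling cost: positive weights across the cut plus
magnitudes of negative weights within each side. -/
noncomputable def psiHCC {α : Type*} [LinearOrder α] (w : α → α → ℝ)
    (XL XR : Finset α) : ℝ :=
  (∑ i ∈ XL, ∑ j ∈ XR, if 0 < w i j then w i j else 0) +
  (∑ p ∈ XL.offDiag.filter (fun p => p.1 < p.2), if w p.1 p.2 < 0 then |w p.1 p.2| else 0) +
  (∑ p ∈ XR.offDiag.filter (fun p => p.1 < p.2), if w p.1 p.2 < 0 then |w p.1 p.2| else 0)

/-- Admissibility of the heuristic `h_cc(X) = ∑_{i<j, w_{ij}>0} w_{ij}` for hierarchical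
correlation clustering: it lower-bounds the cost `φ_HCC(H)` of every binary hierarchical
clustering `H` of `X` (sibling pairs given by split functions `L`, `R`). -/
theorem stmt_5 {α : Type*} [LinearOrder α] (X : Finset α) (H : Finset (Finset α))
    (hH : IsHC X H) (w : α → α → ℝ) (hw : ∀ i j, w i j = w j i)
    (L R : Finset α → Finset α)
    (hLR : ∀ A ∈ H, 1 < A.card →
      L A ∈ H ∧ R A ∈ H ∧ Disjoint (L A) (R A) ∧ L A ∪ R A = A) :
    (∑ p ∈ X.offDiag.filter (fun p => p.1 < p.2), if 0 < w p.1 p.2 then w p.1 p.2 else 0) ≤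
      ∑ A ∈ H.filter (fun A => 1 < A.card), psiHCC w (L A) (R A) := by
  classical
  set posv : α × α → ℝ := fun p => if 0 < w p.1 p.2 then w p.1 p.2 else 0 with hposv
  have hposv_nonneg : ∀ p, 0 ≤ posv p := by
    intro p; simp only [hposv]
    split
    · linarith
    · exact le_refl 0
  have hposv_swap : ∀ p : α × α, posv p.swap = posv p := by
    intro p; simp only [hposv, Prod.fst_swap, Prod.snd_swap, hw p.2 p.1]
  set P := X.offDiag.filter (fun p => p.1 < p.2) with hP
  set Hf := H.filter (fun A => 1 < A.card) with hHf
  set sepAt : Finset α → α × α → Prop :=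
    fun A p => (p.1 ∈ L A ∧ p.2 ∈ R A) ∨ (p.2 ∈ L A ∧ p.1 ∈ R A) with hsepAt
  -- existence of a separating node
  have sep : ∀ p ∈ P, ∃ A ∈ Hf, sepAt A p := by
    intro p hp
    simp only [hP, mem_filter, mem_offDiag] at hp
    obtain ⟨⟨h1, h2, hne⟩, hlt⟩ := hp
    set S := H.filter (fun A => p.1 ∈ A ∧ p.2 ∈ A) with hS
    have hSne : S.Nonempty := ⟨X, by simp [hS, hH.1, h1, h2]⟩
    obtain ⟨A, hAS, hmin⟩ := S.exists_min_image Finset.card hSne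
    simp only [hS, mem_filter] at hAS
    obtain ⟨hAH, hp1, hp2⟩ := hAS
    have hcard : 1 < A.card := Finset.one_lt_card.mpr ⟨p.1, hp1, p.2, hp2, hne⟩
    obtain ⟨hLH, hRH, hdisj, hunion⟩ := hLR A hAH hcard
    have hLne : (L A).Nonempty := (hH.2.2.1 _ hLH).1
    have hRne : (R A).Nonempty := (hH.2.2.1 _ hRH).1
    have hcardu : (L A).card + (R A).card = A.card := by
      rw [← card_union_of_disjoint hdisj, hunion]
    have hLpos : 0 < (L A).card := card_pos.mpr hLne
    have hRpos : 0 < (R A).card := card_pos.mpr hRne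
    have h1' : p.1 ∈ L A ∪ R A := by rw [hunion]; exact hp1
    have h2' : p.2 ∈ L A ∪ R A := by rw [hunion]; exact hp2
    rw [mem_union] at h1' h2'
    refine ⟨A, by simp [hHf, mem_filter, hAH, hcard], ?_⟩
    rcases h1' with hL1 | hR1 <;> rcases h2' with hL2 | hR2
    · have := hmin (L A) (by simp [hS, mem_filter, hLH, hL1, hL2]); omega
    · exact Or.inl ⟨hL1, hR2⟩
    · exact Or.inr ⟨hL2, hR1⟩
    · have := hmin (R A) (by simp [hS, mem_filter, hRH, hR1, hR2]); omega
  -- per-node bound: separated pairs' positive weights are at most the cross term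
  have key : ∀ A : Finset α, (∑ p ∈ P.filter (fun p => sepAt A p), posv p) ≤
      ∑ i ∈ L A, ∑ j ∈ R A, if 0 < w i j then w i j else 0 := by
    intro A
    have hprod : (∑ i ∈ L A, ∑ j ∈ R A, if 0 < w i j then w i j else 0)
        = ∑ q ∈ (L A) ×ˢ (R A), posv q := by
      rw [Finset.sum_product]
    rw [hprod]
    set T := P.filter (fun p => sepAt A p) with hT
    set f : α × α → α × α := fun p => if p.1 ∈ L A ∧ p.2 ∈ R A then p else p.swap with hf
    have hmaps : ∀ p ∈ T, f p ∈ (L A) ×ˢ (R A) := by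
      intro p hp
      simp only [hT, mem_filter] at hp
      simp only [hf]
      split
      · next h => exact mem_product.mpr h
      · next h =>
        rcases hp.2 with h1 | h2
        · exact absurd h1 h
        · exact mem_product.mpr ⟨h2.1, h2.2⟩
    have hlt : ∀ p ∈ T, p.1 < p.2 := by
      intro p hp
      simp only [hT, hP, mem_filter] at hp
      exact hp.1.2
    have hinj : ∀ p ∈ T, ∀ q ∈ T, f p = f q → p = q := by
      intro p hp q hq hfeq
      have hp' := hlt p hp
      have hq' := hlt q hq
      simp only [hf] at hfeq
      split at hfeq <;> split at hfeq
      · exact hfeq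
      · rw [Prod.ext_iff] at hfeq
        simp only [Prod.fst_swap, Prod.snd_swap] at hfeq
        rw [hfeq.1, hfeq.2] at hp'
        exact absurd hq' (lt_asymm hp')
      · rw [Prod.ext_iff] at hfeq
        simp only [Prod.fst_swap, Prod.snd_swap] at hfeq
        rw [← hfeq.1, ← hfeq.2] at hq'
        exact absurd hq' (lt_asymm hp')
      · exact Prod.swap_injective hfeq
    have heq : ∀ p ∈ T, posv p = posv (f p) := by
      intro p _
      simp only [hf]
      split
      · rfl
      · rw [hposv_swap]
    calc ∑ p ∈ T, posv p = ∑ p ∈ T, posv (f p) := Finset.sum_congr rfl heq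
      _ = ∑ q ∈ T.image f, posv q := (Finset.sum_image hinj).symm
      _ ≤ ∑ q ∈ (L A) ×ˢ (R A), posv q := by
          apply Finset.sum_le_sum_of_subset_of_nonneg
          · exact Finset.image_subset_iff.mpr hmaps
          · intro q _ _; exact hposv_nonneg q
  -- cross term is at most psi
  have cross_le_psi : ∀ A : Finset α,
      (∑ i ∈ L A, ∑ j ∈ R A, if 0 < w i j then w i j else 0) ≤ psiHCC w (L A) (R A) := by
    intro A
    unfold psiHCC
    have h1 : 0 ≤ ∑ p ∈ (L A).offDiag.filter (fun p => p.1 < p.2),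
        if w p.1 p.2 < 0 then |w p.1 p.2| else 0 := by
      apply Finset.sum_nonneg; intro p _; split
      · exact abs_nonneg _
      · exact le_refl 0
    have h2 : 0 ≤ ∑ p ∈ (R A).offDiag.filter (fun p => p.1 < p.2),
        if w p.1 p.2 < 0 then |w p.1 p.2| else 0 := by
      apply Finset.sum_nonneg; intro p _; split
      · exact abs_nonneg _
      · exact le_refl 0
    linarith
  -- assemble
  calc (∑ p ∈ P, posv p)
      ≤ ∑ p ∈ P, ∑ A ∈ Hf, (if sepAt A p then posv p else 0) := by
        apply Finset.sum_le_sum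
        intro p hp
        obtain ⟨A₀, hA₀, hsep₀⟩ := sep p hp
        have := Finset.single_le_sum (f := fun A => if sepAt A p then posv p else 0)
          (fun A _ => by
            show (0:ℝ) ≤ if sepAt A p then posv p else 0
            split; exacts [hposv_nonneg p, le_refl 0]) hA₀
        rwa [if_pos hsep₀] at this
    _ = ∑ A ∈ Hf, ∑ p ∈ P, (if sepAt A p then posv p else 0) := Finset.sum_comm
    _ = ∑ A ∈ Hf, ∑ p ∈ P.filter (fun p => sepAt A p), posv p := by
        apply Finset.sum_congr rfl
        intro A _
        exact (Finset.sum_filter (fun p => sepAt A p) posv).symm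
    _ ≤ ∑ A ∈ Hf, psiHCC w (L A) (R A) := by
        apply Finset.sum_le_sum
        intro A _
        exact (key A).trans (cross_le_psi A)
end

section
/- If the heuristic values satisfy h(X_ℓ) ≤ min over binary hierarchical clusterings H' of X_ℓ of φ(H') for every cluster X_ℓ, then for every partial hierarchical clustering H̆ of X with leaf clusters lvs(H̆), the value g(H̆) + Σ_{X_ℓ ∈ lvs(H̆)} h(X_ℓ) is a lower bound on the cost of every complete binary hierarchical clustering H of X extending H̆ (i.e., with H̆ ⊆ H). -/
open Finset

/-- Ordered sibling pairs of `H`: pairs of disjoint members whose union is also a member. -/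
def sibsOrd {α : Type*} [DecidableEq α] (H : Finset (Finset α)) :
    Finset (Finset α × Finset α) :=
  (H ×ˢ H).filter (fun p => Disjoint p.1 p.2 ∧ p.1 ∪ p.2 ∈ H)

/-- The cost `∑_{(A,B) ∈ sibs(H)} ψ(A,B)`; each unordered sibling pair is counted once
(for symmetric `ψ`, via halving the sum over ordered pairs). -/
noncomputable def cost {α : Type*} [DecidableEq α] (ψ : Finset α → Finset α → ℝ)
    (H : Finset (Finset α)) : ℝ :=
  (∑ p ∈ sibsOrd H, ψ p.1 p.2) / 2

/-- The leaves of a partial hierarchical clustering: members with no proper subset in it. -/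
def lvs {α : Type*} [DecidableEq α] (Hb : Finset (Finset α)) : Finset (Finset α) :=
  Hb.filter (fun A => ∀ B ∈ Hb, ¬ B ⊂ A)

lemma sibsOrd_mono {α : Type*} [DecidableEq α] {H₁ H₂ : Finset (Finset α)}
    (hsub : H₁ ⊆ H₂) : sibsOrd H₁ ⊆ sibsOrd H₂ := by
  intro p hp
  simp only [sibsOrd, mem_filter, mem_product] at hp ⊢
  exact ⟨⟨hsub hp.1.1, hsub hp.1.2⟩, hp.2.1, hsub hp.2.2⟩

/-- If the heuristic `h` is admissible, i.e. `h(X_ℓ)` lower-bounds the cost of every binary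
hierarchical clustering of `X_ℓ`, then for every partial hierarchical clustering `H̆` of `X`
(a subset, containing `X`, of a complete binary hierarchical clustering), the value
`g(H̆) + ∑_{X_ℓ ∈ lvs(H̆)} h(X_ℓ)` lower-bounds the cost of every complete binary
hierarchical clustering `H` of `X` extending `H̆`. (Costs use `ψ ≥ 0`, symmetric.) -/
theorem stmt_17 {α : Type*} [DecidableEq α] (X : Finset α)
    (ψ : Finset α → Finset α → ℝ) (hpos : ∀ A B, 0 ≤ ψ A B)
    (hsymm : ∀ A B, ψ A B = ψ B A)
    (h : Finset α → ℝ)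
    (hadm : ∀ C : Finset α, C ⊆ X → ∀ H', IsHC C H' → h C ≤ cost ψ H')
    (Hb H : Finset (Finset α)) (hroot : X ∈ Hb) (hsub : Hb ⊆ H) (hH : IsHC X H) :
    cost ψ Hb + ∑ A ∈ lvs Hb, h A ≤ cost ψ H := by

  classical
  obtain ⟨hXH, hsing, hne, hlam, hsplit⟩ := hH
  set F : Finset α → Finset (Finset α) := fun A => H.filter (· ⊆ A) with hF
  have hFsub : ∀ A, F A ⊆ H := fun A => filter_subset _ _
  have hleafHb : ∀ A ∈ lvs Hb, A ∈ Hb := fun A hA => (mem_filter.mp hA).1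
  have hleafmax : ∀ A ∈ lvs Hb, ∀ B ∈ Hb, ¬ B ⊂ A := fun A hA => (mem_filter.mp hA).2
  have hFHC : ∀ A ∈ lvs Hb, IsHC A (F A) := by
    intro A hA
    have hAH : A ∈ H := hsub (hleafHb A hA)
    have hAX : A ⊆ X := (hne A hAH).2
    refine ⟨mem_filter.mpr ⟨hAH, subset_rfl⟩, ?_, ?_, ?_, ?_⟩
    · intro x hx
      exact mem_filter.mpr ⟨hsing x (hAX hx), singleton_subset_iff.mpr hx⟩
    · intro B hB
      have := mem_filter.mp hB
      exact ⟨(hne B this.1).1, this.2⟩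
    · intro B hB C hC
      exact hlam B (mem_filter.mp hB).1 C (mem_filter.mp hC).1
    · intro B hB hcard
      obtain ⟨C, hC, D, hD, hdis, huni⟩ := hsplit B (mem_filter.mp hB).1 hcard
      have hBA : B ⊆ A := (mem_filter.mp hB).2
      refine ⟨C, mem_filter.mpr ⟨hC, fun x hx => hBA (huni ▸ mem_union_left _ hx)⟩,
        D, mem_filter.mpr ⟨hD, fun x hx => hBA (huni ▸ mem_union_right _ hx)⟩, hdis, huni⟩
  -- distinct leaves are disjoint
  have hleafdisj : ∀ A ∈ lvs Hb, ∀ A' ∈ lvs Hb, A ≠ A' → Disjoint A A' := by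
    intro A hA A' hA' hneq
    have hAH : A ∈ H := hsub (hleafHb A hA)
    have hA'H : A' ∈ H := hsub (hleafHb A' hA')
    rcases hlam A hAH A' hA'H with hss | hss | hdis
    · exact absurd (ssubset_of_subset_of_ne hss hneq) (hleafmax A' hA' A (hleafHb A hA))
    · exact absurd (ssubset_of_subset_of_ne hss hneq.symm) (hleafmax A hA A' (hleafHb A' hA'))
    · exact hdis
  have hmemF : ∀ A, ∀ p ∈ sibsOrd (F A),
      p.1 ∈ H ∧ p.2 ∈ H ∧ p.1 ⊆ A ∧ p.2 ⊆ A ∧ Disjoint p.1 p.2 := by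
    intro A p hp
    simp only [sibsOrd, mem_filter, mem_product, hF] at hp
    exact ⟨hp.1.1.1, hp.1.2.1, hp.1.1.2, hp.1.2.2, hp.2.1⟩
  -- disjointness of sibsOrd Hb from the leaf restrictions
  have hdisj : Disjoint (sibsOrd Hb) ((lvs Hb).biUnion (fun A => sibsOrd (F A))) := by
    rw [Finset.disjoint_left]
    intro p hp hp'
    simp only [mem_biUnion] at hp'
    obtain ⟨A, hA, hpA⟩ := hp'
    obtain ⟨h1H, h2H, h1A, h2A, hd⟩ := hmemF A p hpA
    simp only [sibsOrd, mem_filter, mem_product] at hp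
    have h1Hb : p.1 ∈ Hb := hp.1.1
    have h2Hb : p.2 ∈ Hb := hp.1.2
    have h1eq : p.1 = A := by
      by_contra hne'
      exact hleafmax A hA p.1 h1Hb (ssubset_of_subset_of_ne h1A hne')
    have h2ne : p.2.Nonempty := (hne p.2 h2H).1
    obtain ⟨x, hx⟩ := h2ne
    exact (Finset.disjoint_left.mp hd (h1eq ▸ h2A hx) hx)
  have hpairwise : (↑(lvs Hb) : Set (Finset α)).PairwiseDisjoint
      (fun A => sibsOrd (F A)) := by
    intro A hA A' hA' hneq
    simp only [Function.onFun]
    rw [Finset.disjoint_left]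
    intro p hp hp'
    obtain ⟨h1H, _, h1A, _, _⟩ := hmemF A p hp
    obtain ⟨_, _, h1A', _, _⟩ := hmemF A' p hp'
    obtain ⟨x, hx⟩ := (hne p.1 h1H).1
    exact Finset.disjoint_left.mp (hleafdisj A hA A' hA' hneq) (h1A hx) (h1A' hx)
  have hsubS : sibsOrd Hb ∪ (lvs Hb).biUnion (fun A => sibsOrd (F A)) ⊆ sibsOrd H := by
    apply union_subset (sibsOrd_mono hsub)
    intro p hp
    simp only [mem_biUnion] at hp
    obtain ⟨A, _, hpA⟩ := hp
    exact sibsOrd_mono (hFsub A) hpA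
  have key : ∑ p ∈ sibsOrd Hb, ψ p.1 p.2 + ∑ A ∈ lvs Hb, ∑ p ∈ sibsOrd (F A), ψ p.1 p.2
      ≤ ∑ p ∈ sibsOrd H, ψ p.1 p.2 := by
    rw [← Finset.sum_biUnion hpairwise, ← Finset.sum_union hdisj]
    exact Finset.sum_le_sum_of_subset_of_nonneg hsubS (fun p _ _ => hpos _ _)
  have hstep : ∑ A ∈ lvs Hb, h A ≤ ∑ A ∈ lvs Hb, cost ψ (F A) := by
    apply Finset.sum_le_sum
    intro A hA
    exact hadm A (hne A (hsub (hleafHb A hA))).2 (F A) (hFHC A hA)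
  have h2 : cost ψ Hb + ∑ A ∈ lvs Hb, cost ψ (F A) ≤ cost ψ H := by
    simp only [cost]
    rw [← Finset.sum_div, ← add_div]
    linarith [key]
  linarith [hstep, h2]
end
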